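/- (Mean-volatility performance difference) Define η_π = J_π - λ ν²_π with λ ≥ 0, J_π the normalized expected return and ν²_π the reward volatility, and the mean-volatility advantage A^λ_π(s,a) = Q_π(s,a) - λ X_π(s,a) - (V_π(s) - λ W_π(s)) where X_π, W_π are the action- and state-volatility functions for the constant J_π. Then for any two policies π, π̃: η_{π̃} = η_π + (1-γ) E_{τ|π̃}[∑_t γ^t A^λ_π(s_t,a_t)] + λ (1-γ)² (E_{τ|π̃}[∑_t γ^t A_π(s_t,a_t)])². -/

import Mathlib

open Finset

/-- t-step iterate of a transition kernel on a finite space. -/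
noncomputable def kerPow {T : Type*} [Fintype T] [DecidableEq T] (K : T → T → ℝ) :
    ℕ → T → T → ℝ
  | 0 => fun s s' => if s = s' then 1 else 0
  | (t + 1) => fun s s' => ∑ u, K s u * kerPow K t u s'

/-- State-action transition kernel induced by the MDP dynamics `P` and the policy `π`. -/
def saKer {S A : Type*} (P : S → A → S → ℝ) (π : S → A → ℝ) :
    S × A → S × A → ℝ :=
  fun p q => P p.1 p.2 q.1 * π q.1 q.2

/-- Expected discounted sum of `f(s_t, a_t)` starting from `(s,a)`, following `π`. -/
noncomputable def Qgen {S A : Type*} [Fintype S] [Fintype A] [DecidableEq S] [DecidableEq A]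
    (P : S → A → S → ℝ) (π : S → A → ℝ) (f : S → A → ℝ) (γ : ℝ) (s : S) (a : A) : ℝ :=
  ∑' t : ℕ, γ ^ t * ∑ p : S × A, kerPow (saKer P π) t (s, a) p * f p.1 p.2

/-- Expected discounted sum `E_{τ|π}[∑ₜ γ^t f(s_t,a_t)]` over trajectories started
from the initial distribution `μ` and following `π`. -/
noncomputable def expDisc {S A : Type*} [Fintype S] [Fintype A] [DecidableEq S] [DecidableEq A]
    (P : S → A → S → ℝ) (π : S → A → ℝ) (μ : S → ℝ) (γ : ℝ) (f : S → A → ℝ) : ℝ :=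
  ∑ s, μ s * ∑ a, π s a * Qgen P π f γ s a

section Kernel

variable {T : Type*} [Fintype T] [DecidableEq T] {K : T → T → ℝ} {γ : ℝ}

lemma kerPow_nonneg (hK0 : ∀ x y, 0 ≤ K x y) (t : ℕ) (x y : T) :
    0 ≤ kerPow K t x y := by
  induction t generalizing x y with
  | zero => simp only [kerPow]; split <;> norm_num
  | succ t ih =>
    exact Finset.sum_nonneg fun u _ => mul_nonneg (hK0 _ _) (ih _ _)

lemma kerPow_rowsum (hK1 : ∀ x, ∑ y, K x y = 1) (t : ℕ) (x : T) :
    ∑ y, kerPow K t x y = 1 := by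
  induction t generalizing x with
  | zero => simp [kerPow]
  | succ t ih =>
    simp only [kerPow]
    rw [Finset.sum_comm]
    simp [← Finset.mul_sum, ih, hK1]

lemma kerPow_le_one (hK0 : ∀ x y, 0 ≤ K x y) (hK1 : ∀ x, ∑ y, K x y = 1)
    (t : ℕ) (x y : T) : kerPow K t x y ≤ 1 := by
  calc kerPow K t x y ≤ ∑ y', kerPow K t x y' :=
        Finset.single_le_sum (fun y' _ => kerPow_nonneg hK0 t x y') (Finset.mem_univ y)
    _ = 1 := kerPow_rowsum hK1 t x

lemma kerPow_succ_left (t : ℕ) (x y : T) :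
    kerPow K (t + 1) x y = ∑ u, K x u * kerPow K t u y := by
  simp only [kerPow]

lemma kerPow_succ_right (t : ℕ) (x y : T) :
    kerPow K (t + 1) x y = ∑ u, kerPow K t x u * K u y := by
  induction t generalizing x y with
  | zero => simp [kerPow]
  | succ t ih =>
    rw [kerPow_succ_left]
    calc ∑ u, K x u * kerPow K (t + 1) u y
        = ∑ u, K x u * ∑ v, kerPow K t u v * K v y :=
          Finset.sum_congr rfl fun u _ => by rw [ih]
      _ = ∑ v, (∑ u, K x u * kerPow K t u v) * K v y := by
          simp only [Finset.mul_sum, Finset.sum_mul]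
          rw [Finset.sum_comm]
          exact Finset.sum_congr rfl fun u _ => Finset.sum_congr rfl fun v _ => by ring
      _ = ∑ v, kerPow K (t + 1) x v * K v y :=
          Finset.sum_congr rfl fun v _ => by rw [kerPow_succ_left]

lemma ker_summable (hK0 : ∀ x y, 0 ≤ K x y) (hK1 : ∀ x, ∑ y, K x y = 1)
    (hγ0 : 0 ≤ γ) (hγ1 : γ < 1) (g : T → ℝ) (x : T) :
    Summable (fun t : ℕ => γ ^ t * ∑ y, kerPow K t x y * g y) := by
  apply Summable.of_norm_bounded (g := fun t => γ ^ t * ∑ y, |g y|)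
    ((summable_geometric_of_lt_one hγ0 hγ1).mul_right _)
  intro t
  rw [Real.norm_eq_abs, abs_mul, abs_pow, abs_of_nonneg hγ0]
  apply mul_le_mul_of_nonneg_left _ (pow_nonneg hγ0 t)
  calc |∑ y, kerPow K t x y * g y| ≤ ∑ y, |kerPow K t x y * g y| :=
        Finset.abs_sum_le_sum_abs _ _
    _ ≤ ∑ y, |g y| := by
        apply Finset.sum_le_sum; intro y _
        rw [abs_mul, abs_of_nonneg (kerPow_nonneg hK0 t x y)]
        exact mul_le_of_le_one_left (abs_nonneg _) (kerPow_le_one hK0 hK1 t x y)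

lemma shift_term_eq (v : T → ℝ) (x : T) (t : ℕ) :
    γ ^ t * ∑ y, kerPow K t x y * (γ * (∑ z, K y z * v z) - v y)
      = γ ^ (t + 1) * (∑ y, kerPow K (t + 1) x y * v y)
        - γ ^ t * ∑ y, kerPow K t x y * v y := by
  have h1 : ∑ y, kerPow K (t + 1) x y * v y
      = ∑ y, kerPow K t x y * (∑ z, K y z * v z) := by
    simp only [kerPow_succ_right, Finset.sum_mul]
    rw [Finset.sum_comm]
    simp [Finset.mul_sum, mul_assoc]
  have h2 : ∀ y, kerPow K t x y * (γ * (∑ z, K y z * v z) - v y)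
      = γ * (kerPow K t x y * (∑ z, K y z * v z)) - kerPow K t x y * v y := by
    intro y; ring
  rw [Finset.sum_congr rfl (fun y _ => h2 y), Finset.sum_sub_distrib, ← Finset.mul_sum, ← h1]
  ring

lemma G_shift (hK0 : ∀ x y, 0 ≤ K x y) (hK1 : ∀ x, ∑ y, K x y = 1)
    (hγ0 : 0 ≤ γ) (hγ1 : γ < 1) (v : T → ℝ) (x : T) :
    ∑' t : ℕ, γ ^ t * ∑ y, kerPow K t x y * (γ * (∑ z, K y z * v z) - v y) = -v x := by
  have hu : Summable (fun t : ℕ => γ ^ t * ∑ y, kerPow K t x y * v y) :=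
    ker_summable hK0 hK1 hγ0 hγ1 v x
  have hshift : Summable (fun t : ℕ => γ ^ (t + 1) * ∑ y, kerPow K (t + 1) x y * v y) :=
    (summable_nat_add_iff (f := fun t : ℕ => γ ^ t * ∑ y, kerPow K t x y * v y) 1).2 hu
  rw [tsum_congr (shift_term_eq v x), hshift.tsum_sub hu]
  have h0 : ∑' t : ℕ, γ ^ (t + 1) * ∑ y, kerPow K (t + 1) x y * v y
      = (∑' t : ℕ, γ ^ t * ∑ y, kerPow K t x y * v y)
        - γ ^ 0 * ∑ y, kerPow K 0 x y * v y := by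
    rw [hu.tsum_eq_zero_add]; ring
  rw [h0]
  have : γ ^ 0 * ∑ y, kerPow K 0 x y * v y = v x := by simp [kerPow]
  rw [this]; ring

lemma shift_summable (hK0 : ∀ x y, 0 ≤ K x y) (hK1 : ∀ x, ∑ y, K x y = 1)
    (hγ0 : 0 ≤ γ) (hγ1 : γ < 1) (v : T → ℝ) (x : T) :
    Summable (fun t : ℕ =>
      γ ^ t * ∑ y, kerPow K t x y * (γ * (∑ z, K y z * v z) - v y)) := by
  have hu : Summable (fun t : ℕ => γ ^ t * ∑ y, kerPow K t x y * v y) :=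
    ker_summable hK0 hK1 hγ0 hγ1 v x
  have hshift : Summable (fun t : ℕ => γ ^ (t + 1) * ∑ y, kerPow K (t + 1) x y * v y) :=
    (summable_nat_add_iff (f := fun t : ℕ => γ ^ t * ∑ y, kerPow K t x y * v y) 1).2 hu
  exact (hshift.sub hu).congr fun t => (shift_term_eq v x t).symm

lemma Gsum_pdl (hK0 : ∀ x y, 0 ≤ K x y) (hK1 : ∀ x, ∑ y, K x y = 1)
    (hγ0 : 0 ≤ γ) (hγ1 : γ < 1) (g v : T → ℝ) (x : T) :
    ∑' t : ℕ, γ ^ t * ∑ y, kerPow K t x y * (g y + (γ * (∑ z, K y z * v z) - v y))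
      = (∑' t : ℕ, γ ^ t * ∑ y, kerPow K t x y * g y) - v x := by
  have h1 := ker_summable hK0 hK1 hγ0 hγ1 g x
  have h2 := shift_summable hK0 hK1 hγ0 hγ1 v x
  have hsplit : ∀ t : ℕ,
      γ ^ t * ∑ y, kerPow K t x y * (g y + (γ * (∑ z, K y z * v z) - v y))
        = γ ^ t * ∑ y, kerPow K t x y * g y
          + γ ^ t * ∑ y, kerPow K t x y * (γ * (∑ z, K y z * v z) - v y) := by
    intro t
    rw [← mul_add, ← Finset.sum_add_distrib]
    congr 1
    exact Finset.sum_congr rfl fun y _ => by ring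
  rw [tsum_congr hsplit, h1.tsum_add h2, G_shift hK0 hK1 hγ0 hγ1 v x]
  ring

lemma Gsum_bellman (hK0 : ∀ x y, 0 ≤ K x y) (hK1 : ∀ x, ∑ y, K x y = 1)
    (hγ0 : 0 ≤ γ) (hγ1 : γ < 1) (g : T → ℝ) (x : T) :
    ∑' t : ℕ, γ ^ t * ∑ y, kerPow K t x y * g y
      = g x + γ * ∑ u, K x u * ∑' t : ℕ, γ ^ t * ∑ y, kerPow K t u y * g y := by
  rw [(ker_summable hK0 hK1 hγ0 hγ1 g x).tsum_eq_zero_add]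
  have h0 : γ ^ 0 * ∑ y, kerPow K 0 x y * g y = g x := by simp [kerPow]
  rw [h0]
  congr 1
  have hterm : ∀ t : ℕ, γ ^ (t + 1) * ∑ y, kerPow K (t + 1) x y * g y
      = ∑ u, γ * (K x u * (γ ^ t * ∑ y, kerPow K t u y * g y)) := by
    intro t
    have h1 : ∑ y, kerPow K (t + 1) x y * g y
        = ∑ u, K x u * ∑ y, kerPow K t u y * g y := by
      simp only [kerPow_succ_left, Finset.sum_mul]
      rw [Finset.sum_comm]
      simp [Finset.mul_sum, mul_assoc]
    rw [h1, Finset.mul_sum]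
    exact Finset.sum_congr rfl fun u _ => by ring
  rw [tsum_congr hterm,
    Summable.tsum_finsetSum (fun u _ => ((ker_summable hK0 hK1 hγ0 hγ1 g u).mul_left (K x u)).mul_left γ)]
  rw [Finset.mul_sum]
  apply Finset.sum_congr rfl; intro u _
  rw [tsum_mul_left, tsum_mul_left]

lemma Gsum_add (hK0 : ∀ x y, 0 ≤ K x y) (hK1 : ∀ x, ∑ y, K x y = 1)
    (hγ0 : 0 ≤ γ) (hγ1 : γ < 1) (g h : T → ℝ) (x : T) :
    ∑' t : ℕ, γ ^ t * ∑ y, kerPow K t x y * (g y + h y)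
      = (∑' t : ℕ, γ ^ t * ∑ y, kerPow K t x y * g y)
        + ∑' t : ℕ, γ ^ t * ∑ y, kerPow K t x y * h y := by
  have hsplit : ∀ t : ℕ, γ ^ t * ∑ y, kerPow K t x y * (g y + h y)
      = γ ^ t * ∑ y, kerPow K t x y * g y + γ ^ t * ∑ y, kerPow K t x y * h y := by
    intro t
    rw [← mul_add, ← Finset.sum_add_distrib]
    congr 1
    exact Finset.sum_congr rfl fun y _ => by ring
  rw [tsum_congr hsplit,
    (ker_summable hK0 hK1 hγ0 hγ1 g x).tsum_add (ker_summable hK0 hK1 hγ0 hγ1 h x)]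

lemma Gsum_smul (c : ℝ) (g : T → ℝ) (x : T) :
    ∑' t : ℕ, γ ^ t * ∑ y, kerPow K t x y * (c * g y)
      = c * ∑' t : ℕ, γ ^ t * ∑ y, kerPow K t x y * g y := by
  have h : ∀ t : ℕ, γ ^ t * ∑ y, kerPow K t x y * (c * g y)
      = c * (γ ^ t * ∑ y, kerPow K t x y * g y) := by
    intro t
    have : ∑ y, kerPow K t x y * (c * g y) = c * ∑ y, kerPow K t x y * g y := by
      rw [Finset.mul_sum]; exact Finset.sum_congr rfl fun y _ => by ring
    rw [this]; ring
  rw [tsum_congr h, tsum_mul_left]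

lemma Gsum_const (hK1 : ∀ x, ∑ y, K x y = 1) (hγ0 : 0 ≤ γ) (hγ1 : γ < 1)
    (c : ℝ) (x : T) :
    ∑' t : ℕ, γ ^ t * ∑ y, kerPow K t x y * c = c * (1 - γ)⁻¹ := by
  have : ∀ t : ℕ, γ ^ t * ∑ y, kerPow K t x y * c = c * γ ^ t := by
    intro t
    rw [← Finset.sum_mul, kerPow_rowsum hK1]
    ring
  rw [tsum_congr this, tsum_mul_left, tsum_geometric_of_lt_one hγ0 hγ1]

end Kernel

section MDPAux

variable {S A : Type*} [Fintype S] [Fintype A] [DecidableEq S] [DecidableEq A]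
variable {P : S → A → S → ℝ} {γ : ℝ} {μ : S → ℝ}

lemma saKer_nonneg {ρ : S → A → ℝ} (hP0 : ∀ s a s', 0 ≤ P s a s')
    (hρ0 : ∀ s a, 0 ≤ ρ s a) : ∀ x y : S × A, 0 ≤ saKer P ρ x y :=
  fun _ _ => mul_nonneg (hP0 _ _ _) (hρ0 _ _)

lemma saKer_rowsum {ρ : S → A → ℝ} (hP1 : ∀ s a, ∑ s', P s a s' = 1)
    (hρ1 : ∀ s, ∑ a, ρ s a = 1) : ∀ x : S × A, ∑ y, saKer P ρ x y = 1 := by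
  intro x
  rw [Fintype.sum_prod_type]
  simp only [saKer]
  simp [← Finset.mul_sum, hρ1, hP1]

lemma Qgen_bellman {ρ : S → A → ℝ} (hP0 : ∀ s a s', 0 ≤ P s a s')
    (hP1 : ∀ s a, ∑ s', P s a s' = 1) (hρ0 : ∀ s a, 0 ≤ ρ s a)
    (hρ1 : ∀ s, ∑ a, ρ s a = 1) (hγ0 : 0 ≤ γ) (hγ1 : γ < 1) (f : S → A → ℝ) (s : S) (a : A) :
    Qgen P ρ f γ s a
      = f s a + γ * ∑ u : S × A, saKer P ρ (s, a) u * Qgen P ρ f γ u.1 u.2 :=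
  Gsum_bellman (saKer_nonneg hP0 hρ0) (saKer_rowsum hP1 hρ1) hγ0 hγ1
    (fun p => f p.1 p.2) (s, a)

lemma Qgen_add {ρ : S → A → ℝ} (hP0 : ∀ s a s', 0 ≤ P s a s')
    (hP1 : ∀ s a, ∑ s', P s a s' = 1) (hρ0 : ∀ s a, 0 ≤ ρ s a)
    (hρ1 : ∀ s, ∑ a, ρ s a = 1) (hγ0 : 0 ≤ γ) (hγ1 : γ < 1) (g h : S → A → ℝ) (s : S) (a : A) :
    Qgen P ρ (fun s a => g s a + h s a) γ s a = Qgen P ρ g γ s a + Qgen P ρ h γ s a :=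
  Gsum_add (saKer_nonneg hP0 hρ0) (saKer_rowsum hP1 hρ1) hγ0 hγ1
    (fun p => g p.1 p.2) (fun p => h p.1 p.2) (s, a)

lemma Qgen_smul {ρ : S → A → ℝ} (c : ℝ) (g : S → A → ℝ) (s : S) (a : A) :
    Qgen P ρ (fun s a => c * g s a) γ s a = c * Qgen P ρ g γ s a :=
  Gsum_smul (K := saKer P ρ) (γ := γ) c (fun p => g p.1 p.2) (s, a)

lemma Qgen_const {ρ : S → A → ℝ} (hP1 : ∀ s a, ∑ s', P s a s' = 1)
    (hρ1 : ∀ s, ∑ a, ρ s a = 1) (hγ0 : 0 ≤ γ) (hγ1 : γ < 1) (c : ℝ) (s : S) (a : A) :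
    Qgen P ρ (fun _ _ => c) γ s a = c * (1 - γ)⁻¹ :=
  Gsum_const (saKer_rowsum hP1 hρ1) hγ0 hγ1 c (s, a)

lemma expDisc_add {πt : S → A → ℝ} (hP0 : ∀ s a s', 0 ≤ P s a s')
    (hP1 : ∀ s a, ∑ s', P s a s' = 1) (hπt0 : ∀ s a, 0 ≤ πt s a)
    (hπt1 : ∀ s, ∑ a, πt s a = 1) (hγ0 : 0 ≤ γ) (hγ1 : γ < 1) (g h : S → A → ℝ) :
    expDisc P πt μ γ (fun s a => g s a + h s a)
      = expDisc P πt μ γ g + expDisc P πt μ γ h := by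
  unfold expDisc
  rw [← Finset.sum_add_distrib]
  apply Finset.sum_congr rfl; intro s _
  rw [← mul_add, ← Finset.sum_add_distrib]
  congr 1
  apply Finset.sum_congr rfl; intro a _
  rw [Qgen_add hP0 hP1 hπt0 hπt1 hγ0 hγ1]
  ring

lemma expDisc_smul {πt : S → A → ℝ} (c : ℝ) (g : S → A → ℝ) :
    expDisc P πt μ γ (fun s a => c * g s a) = c * expDisc P πt μ γ g := by
  unfold expDisc
  have h : ∀ s, ∑ a, πt s a * Qgen P πt (fun s a => c * g s a) γ s a
      = c * ∑ a, πt s a * Qgen P πt g γ s a := by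
    intro s
    rw [Finset.mul_sum]
    apply Finset.sum_congr rfl; intro a _
    rw [Qgen_smul]; ring
  rw [Finset.sum_congr rfl fun s _ => by rw [h s]]
  rw [Finset.mul_sum]
  exact Finset.sum_congr rfl fun s _ => by ring

lemma expDisc_const {πt : S → A → ℝ} (hP1 : ∀ s a, ∑ s', P s a s' = 1)
    (hπt1 : ∀ s, ∑ a, πt s a = 1) (hμ1 : ∑ s, μ s = 1) (hγ0 : 0 ≤ γ) (hγ1 : γ < 1)
    (c : ℝ) : expDisc P πt μ γ (fun _ _ => c) = c * (1 - γ)⁻¹ := by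
  unfold expDisc
  have : ∀ s : S, ∑ a, πt s a * Qgen P πt (fun _ _ => c) γ s a = c * (1 - γ)⁻¹ := by
    intro s
    rw [show ∑ a, πt s a * Qgen P πt (fun _ _ => c) γ s a
        = ∑ a, πt s a * (c * (1 - γ)⁻¹) from
      Finset.sum_congr rfl fun a _ => by rw [Qgen_const hP1 hπt1 hγ0 hγ1]]
    rw [← Finset.sum_mul, hπt1, one_mul]
  rw [Finset.sum_congr rfl fun s _ => by rw [this s]]
  rw [← Finset.sum_mul, hμ1, one_mul]

lemma expDisc_pdl (P : S → A → S → ℝ) (π πt : S → A → ℝ) (γ : ℝ) (μ : S → ℝ)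
    (hP0 : ∀ s a s', 0 ≤ P s a s') (hP1 : ∀ s a, ∑ s', P s a s' = 1)
    (hπ0 : ∀ s a, 0 ≤ π s a) (hπ1 : ∀ s, ∑ a, π s a = 1)
    (hπt0 : ∀ s a, 0 ≤ πt s a) (hπt1 : ∀ s, ∑ a, πt s a = 1)
    (hγ0 : 0 ≤ γ) (hγ1 : γ < 1) (f : S → A → ℝ) :
    expDisc P πt μ γ (fun s a => Qgen P π f γ s a - ∑ b, π s b * Qgen P π f γ s b)
      = expDisc P πt μ γ f - ∑ s, μ s * ∑ b, π s b * Qgen P π f γ s b := by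
  have hK0 := saKer_nonneg (ρ := πt) hP0 hπt0
  have hK1 := saKer_rowsum (ρ := πt) hP1 hπt1
  -- value function and its lift to S × A
  have key : ∀ (s : S) (a : A),
      Qgen P π f γ s a - ∑ b, π s b * Qgen P π f γ s b
        = f s a + (γ * (∑ z : S × A, saKer P πt (s, a) z *
            ((fun p : S × A => ∑ b, π p.1 b * Qgen P π f γ p.1 b) z))
          - (fun p : S × A => ∑ b, π p.1 b * Qgen P π f γ p.1 b) (s, a)) := by
    intro s a
    have hb := Qgen_bellman hP0 hP1 hπ0 hπ1 hγ0 hγ1 f s a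
    have e1 : ∑ u : S × A, saKer P π (s, a) u * Qgen P π f γ u.1 u.2
        = ∑ s', P s a s' * ∑ b, π s' b * Qgen P π f γ s' b := by
      rw [Fintype.sum_prod_type]
      apply Finset.sum_congr rfl; intro s' _
      simp [saKer, Finset.mul_sum, mul_assoc]
    have e2 : ∑ z : S × A, saKer P πt (s, a) z *
          ((fun p : S × A => ∑ b, π p.1 b * Qgen P π f γ p.1 b) z)
        = ∑ s', P s a s' * ∑ b, π s' b * Qgen P π f γ s' b := by
      rw [Fintype.sum_prod_type]
      apply Finset.sum_congr rfl; intro s' _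
      simp only [saKer]
      rw [← Finset.sum_mul]
      rw [show ∑ a', P s a s' * πt s' a' = P s a s' * ∑ a', πt s' a' from by
        rw [Finset.mul_sum], hπt1, mul_one]
      -- goal shape check
    rw [e2]
    simp only []
    rw [hb, e1]
    ring
  have main : ∀ (s : S) (a : A),
      Qgen P πt (fun s a => Qgen P π f γ s a - ∑ b, π s b * Qgen P π f γ s b) γ s a
        = Qgen P πt f γ s a - ∑ b, π s b * Qgen P π f γ s b := by
    intro s a
    have h1 : Qgen P πt (fun s a => Qgen P π f γ s a - ∑ b, π s b * Qgen P π f γ s b) γ s a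
        = ∑' t : ℕ, γ ^ t * ∑ p : S × A, kerPow (saKer P πt) t (s, a) p *
            ((fun p : S × A => f p.1 p.2) p
              + (γ * (∑ z : S × A, saKer P πt p z *
                  ((fun q : S × A => ∑ b, π q.1 b * Qgen P π f γ q.1 b) z))
                - (fun q : S × A => ∑ b, π q.1 b * Qgen P π f γ q.1 b) p)) := by
      apply tsum_congr; intro t
      congr 1
      apply Finset.sum_congr rfl; intro p _
      congr 1
      exact key p.1 p.2
    rw [h1, Gsum_pdl hK0 hK1 hγ0 hγ1 (fun p : S × A => f p.1 p.2)
      (fun p : S × A => ∑ b, π p.1 b * Qgen P π f γ p.1 b) (s, a)]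
    rfl
  unfold expDisc
  rw [← Finset.sum_sub_distrib]
  apply Finset.sum_congr rfl; intro s _
  rw [← mul_sub]
  congr 1
  rw [Finset.sum_congr rfl fun a _ => by rw [main s a]]
  rw [show (∑ a, πt s a * (Qgen P πt f γ s a - ∑ b, π s b * Qgen P π f γ s b))
      = ∑ a, (πt s a * Qgen P πt f γ s a
          - πt s a * (∑ b, π s b * Qgen P π f γ s b)) from
    Finset.sum_congr rfl fun a _ => by ring]
  rw [Finset.sum_sub_distrib, ← Finset.sum_mul, hπt1, one_mul]

end MDPAux

/-- Mean-volatility performance difference lemma. -/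
theorem stmt_10 {S A : Type*} [Fintype S] [Fintype A] [DecidableEq S] [DecidableEq A]
    (P : S → A → S → ℝ) (π πt : S → A → ℝ) (R : S → A → ℝ) (γ lam : ℝ) (μ : S → ℝ)
    (hP0 : ∀ s a s', 0 ≤ P s a s') (hP1 : ∀ s a, ∑ s', P s a s' = 1)
    (hπ0 : ∀ s a, 0 ≤ π s a) (hπ1 : ∀ s, ∑ a, π s a = 1)
    (hπt0 : ∀ s a, 0 ≤ πt s a) (hπt1 : ∀ s, ∑ a, πt s a = 1)
    (hμ0 : ∀ s, 0 ≤ μ s) (hμ1 : ∑ s, μ s = 1)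
    (hγ0 : 0 ≤ γ) (hγ1 : γ < 1) (hlam : 0 ≤ lam)
    (Jπ Jπt ν2π ν2πt ηπ ηπt : ℝ)
    (Q : S → A → ℝ) (V : S → ℝ) (X : S → A → ℝ) (W : S → ℝ)
    (Adv AdvL : S → A → ℝ)
    (hJπ : Jπ = (1 - γ) * expDisc P π μ γ R)
    (hJπt : Jπt = (1 - γ) * expDisc P πt μ γ R)
    (hν2π : ν2π = (1 - γ) * expDisc P π μ γ (fun s a => (R s a - Jπ) ^ 2))
    (hν2πt : ν2πt = (1 - γ) * expDisc P πt μ γ (fun s a => (R s a - Jπt) ^ 2))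
    (hηπ : ηπ = Jπ - lam * ν2π) (hηπt : ηπt = Jπt - lam * ν2πt)
    (hQ : ∀ s a, Q s a = Qgen P π R γ s a)
    (hV : ∀ s, V s = ∑ a, π s a * Q s a)
    (hX : ∀ s a, X s a = Qgen P π (fun s' a' => (R s' a' - Jπ) ^ 2) γ s a)
    (hW : ∀ s, W s = ∑ a, π s a * X s a)
    (hA : ∀ s a, Adv s a = Q s a - V s)
    (hAL : ∀ s a, AdvL s a = Q s a - lam * X s a - (V s - lam * W s)) :
    ηπt = ηπ + (1 - γ) * expDisc P πt μ γ AdvL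
      + lam * (1 - γ) ^ 2 * (expDisc P πt μ γ Adv) ^ 2 := by
  have hQV : ∀ s, V s = ∑ b, π s b * Qgen P π R γ s b := by
    intro s; rw [hV]; exact Finset.sum_congr rfl fun b _ => by rw [hQ]
  have hWX : ∀ s, W s = ∑ b, π s b * Qgen P π (fun s' a' => (R s' a' - Jπ) ^ 2) γ s b := by
    intro s; rw [hW]; exact Finset.sum_congr rfl fun b _ => by rw [hX]
  -- PDL for R
  have hAdvfun : Adv = fun s a => Qgen P π R γ s a - ∑ b, π s b * Qgen P π R γ s b := by
    funext s a; rw [hA, hQ, hQV]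
  have hMuV : ∑ s, μ s * ∑ b, π s b * Qgen P π R γ s b = expDisc P π μ γ R := rfl
  have hpdlR : expDisc P πt μ γ Adv = expDisc P πt μ γ R - expDisc P π μ γ R := by
    rw [hAdvfun, expDisc_pdl P π πt γ μ hP0 hP1 hπ0 hπ1 hπt0 hπt1 hγ0 hγ1 R, hMuV]
  have hDR : (1 - γ) * expDisc P πt μ γ Adv = Jπt - Jπ := by
    rw [hpdlR, hJπt, hJπ]; ring
  -- PDL for the squared deviation
  have hAdvXfun : (fun s a => X s a - W s)
      = fun s a => Qgen P π (fun s' a' => (R s' a' - Jπ) ^ 2) γ s a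
          - ∑ b, π s b * Qgen P π (fun s' a' => (R s' a' - Jπ) ^ 2) γ s b := by
    funext s a; rw [hX, hWX]
  have hMuW : ∑ s, μ s * ∑ b, π s b * Qgen P π (fun s' a' => (R s' a' - Jπ) ^ 2) γ s b
      = expDisc P π μ γ (fun s' a' => (R s' a' - Jπ) ^ 2) := rfl
  have hpdlX : expDisc P πt μ γ (fun s a => X s a - W s)
      = expDisc P πt μ γ (fun s' a' => (R s' a' - Jπ) ^ 2)
        - expDisc P π μ γ (fun s' a' => (R s' a' - Jπ) ^ 2) := by
    rw [hAdvXfun, expDisc_pdl P π πt γ μ hP0 hP1 hπ0 hπ1 hπt0 hπt1 hγ0 hγ1, hMuW]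
  have hDX : (1 - γ) * expDisc P πt μ γ (fun s a => X s a - W s)
      = (1 - γ) * expDisc P πt μ γ (fun s' a' => (R s' a' - Jπ) ^ 2) - ν2π := by
    rw [hpdlX, hν2π]; ring
  -- expansion of ν2πt
  have hsq : (fun s a => (R s a - Jπt) ^ 2)
      = fun s a => (R s a - Jπ) ^ 2
          + ((2 * (Jπ - Jπt)) * R s a + (Jπt ^ 2 - Jπ ^ 2)) := by
    funext s a; ring
  have e1 : expDisc P πt μ γ (fun s a => (R s a - Jπt) ^ 2)
      = expDisc P πt μ γ (fun s' a' => (R s' a' - Jπ) ^ 2)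
        + expDisc P πt μ γ (fun s a => (2 * (Jπ - Jπt)) * R s a + (Jπt ^ 2 - Jπ ^ 2)) := by
    rw [hsq]
    exact expDisc_add hP0 hP1 hπt0 hπt1 hγ0 hγ1 (fun s a => (R s a - Jπ) ^ 2)
      (fun s a => (2 * (Jπ - Jπt)) * R s a + (Jπt ^ 2 - Jπ ^ 2))
  have e2 : expDisc P πt μ γ (fun s a => (2 * (Jπ - Jπt)) * R s a + (Jπt ^ 2 - Jπ ^ 2))
      = (2 * (Jπ - Jπt)) * expDisc P πt μ γ R + (Jπt ^ 2 - Jπ ^ 2) * (1 - γ)⁻¹ := by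
    rw [expDisc_add hP0 hP1 hπt0 hπt1 hγ0 hγ1 (fun s a => (2 * (Jπ - Jπt)) * R s a)
        (fun _ _ => Jπt ^ 2 - Jπ ^ 2),
      expDisc_smul (2 * (Jπ - Jπt)) R,
      expDisc_const hP1 hπt1 hμ1 hγ0 hγ1 (Jπt ^ 2 - Jπ ^ 2)]
  have hne : (1 - γ) ≠ 0 := by linarith
  have hν2πt' : ν2πt = (1 - γ) * expDisc P πt μ γ (fun s' a' => (R s' a' - Jπ) ^ 2)
      - (Jπt - Jπ) ^ 2 := by
    rw [hν2πt, e1, e2]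
    have hJ : (1 - γ) * expDisc P πt μ γ R = Jπt := hJπt.symm
    have hinv : (Jπt ^ 2 - Jπ ^ 2) * (1 - γ)⁻¹ * (1 - γ) = Jπt ^ 2 - Jπ ^ 2 := by
      field_simp
    linear_combination (2 * (Jπ - Jπt)) * hJ + hinv
  -- AdvL decomposition
  have hALfun : AdvL = fun s a => Adv s a + (-lam) * (X s a - W s) := by
    funext s a; rw [hAL, hA]; ring
  have hEL : expDisc P πt μ γ AdvL
      = expDisc P πt μ γ Adv + (-lam) * expDisc P πt μ γ (fun s a => X s a - W s) := by
    rw [hALfun, expDisc_add hP0 hP1 hπt0 hπt1 hγ0 hγ1 Adv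
        (fun s a => (-lam) * (X s a - W s)),
      expDisc_smul (-lam) (fun s a => X s a - W s)]
  -- final assembly
  have key1 : (1 - γ) * expDisc P πt μ γ AdvL
      = (Jπt - Jπ) - lam * ((1 - γ) * expDisc P πt μ γ (fun s' a' => (R s' a' - Jπ) ^ 2) - ν2π) := by
    rw [hEL]
    linear_combination hDR - lam * hDX
  have key2 : lam * (1 - γ) ^ 2 * (expDisc P πt μ γ Adv) ^ 2 = lam * (Jπt - Jπ) ^ 2 := by
    have h : lam * (1 - γ) ^ 2 * (expDisc P πt μ γ Adv) ^ 2
        = lam * ((1 - γ) * expDisc P πt μ γ Adv) ^ 2 := by ring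
    rw [h, hDR]
  rw [hηπt, hηπ, hν2πt']
  linear_combination -key1 - key2
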